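/- There is no differentiable function φ : ℝ² → ℝ whose gradient satisfies ∇φ(x, y) = (6x + e^{3x + y²}, 2y·e^{3x + y²}) for all (x, y) ∈ ℝ². Consequently, the composition of the cyclically monotone maps (x, y) ↦ (3x, y) and (x, y) ↦ (2x + e^{x + y²}, 2y·e^{x + y²}) is not the gradient of any differentiable function. -/

import Mathlib

open Real

local notation "E2" => EuclideanSpace ℝ (Fin 2)

def P (x y : ℝ) : EuclideanSpace ℝ (Fin 2) := !₂[x, y]

lemma grad_apply (φ : EuclideanSpace ℝ (Fin 2) → ℝ) (p : E2) (i : Fin 2) :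
    gradient φ p i = fderiv ℝ φ p (EuclideanSpace.single i 1) := by
  have h : (inner ℝ (gradient φ p) (EuclideanSpace.single i (1:ℝ)) : ℝ)
      = fderiv ℝ φ p (EuclideanSpace.single i 1) := by
    rw [gradient]; exact InnerProductSpace.toDual_symm_apply
  rwa [EuclideanSpace.inner_single_right, RCLike.conj_to_real, one_mul] at h

lemma line_x (φ : EuclideanSpace ℝ (Fin 2) → ℝ) (hφ : Differentiable ℝ φ) (y t : ℝ) :
    HasDerivAt (fun x : ℝ => φ (P x y)) (gradient φ (P t y) 0) t := by
  have hc : HasDerivAt (fun x : ℝ => P x y) (EuclideanSpace.single (0:Fin 2) (1:ℝ)) t := by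
    have he : (fun x : ℝ => P x y)
        = fun x : ℝ => x • (EuclideanSpace.single (0:Fin 2) (1:ℝ)) + P 0 y := by
      funext s; ext i; fin_cases i <;>
        simp [P, EuclideanSpace.single_apply, PiLp.add_apply, PiLp.smul_apply]
    rw [he]
    simpa using ((hasDerivAt_id t).smul_const
      (EuclideanSpace.single (0:Fin 2) (1:ℝ))).add_const (P 0 y)
  have h2 := (hφ.differentiableAt.hasFDerivAt).comp_hasDerivAt t hc
  rw [grad_apply]
  exact h2

lemma line_y (φ : EuclideanSpace ℝ (Fin 2) → ℝ) (hφ : Differentiable ℝ φ) (x t : ℝ) :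
    HasDerivAt (fun y : ℝ => φ (P x y)) (gradient φ (P x t) 1) t := by
  have hc : HasDerivAt (fun y : ℝ => P x y) (EuclideanSpace.single (1:Fin 2) (1:ℝ)) t := by
    have he : (fun y : ℝ => P x y)
        = fun y : ℝ => y • (EuclideanSpace.single (1:Fin 2) (1:ℝ)) + P x 0 := by
      funext s; ext i; fin_cases i <;>
        simp [P, EuclideanSpace.single_apply, PiLp.add_apply, PiLp.smul_apply]
    rw [he]
    simpa using ((hasDerivAt_id t).smul_const
      (EuclideanSpace.single (1:Fin 2) (1:ℝ))).add_const (P x 0)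
  have h2 := (hφ.differentiableAt.hasFDerivAt).comp_hasDerivAt t hc
  rw [grad_apply]
  exact h2

lemma const_of_deriv_zero (f : ℝ → ℝ) (h : ∀ t, HasDerivAt f 0 t) : f 1 = f 0 :=
  is_const_of_deriv_eq_zero (fun t => (h t).differentiableAt)
    (fun t => (h t).deriv) 1 0

lemma P_app0 (x y : ℝ) : (P x y) 0 = x := rfl
lemma P_app1 (x y : ℝ) : (P x y) 1 = y := rfl

lemma no_grad (φ : EuclideanSpace ℝ (Fin 2) → ℝ) (hφ : Differentiable ℝ φ)
    (h : ∀ p : EuclideanSpace ℝ (Fin 2),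
        gradient φ p 0 = 6 * p 0 + Real.exp (3 * p 0 + (p 1) ^ 2) ∧
        gradient φ p 1 = 2 * p 1 * Real.exp (3 * p 0 + (p 1) ^ 2)) : False := by
  have hv : ∀ x : ℝ, φ (P x 1) - Real.exp (3*x + 1^2) = φ (P x 0) - Real.exp (3*x + 0^2) := by
    intro x
    have key : ∀ t : ℝ, HasDerivAt (fun y : ℝ => φ (P x y) - Real.exp (3*x + y^2)) 0 t := by
      intro t
      have h1 := line_y φ hφ x t
      have h1' : HasDerivAt (fun y : ℝ => φ (P x y)) (2*t*Real.exp (3*x + t^2)) t := by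
        have hg := (h (P x t)).2
        rw [P_app0, P_app1] at hg
        rwa [hg] at h1
      have h2 : HasDerivAt (fun y : ℝ => Real.exp (3*x + y^2)) (2*t*Real.exp (3*x + t^2)) t := by
        have hp : HasDerivAt (fun y : ℝ => 3*x + y^2) (2*t) t := by
          have := (hasDerivAt_pow 2 t).const_add (3*x)
          exact this.congr_deriv (by push_cast; ring)
        have := hp.exp
        exact this.congr_deriv (by ring)
      simpa [Pi.sub_def] using h1'.sub h2
    have := const_of_deriv_zero _ key
    simpa using this
  have hh : ∀ y : ℝ, φ (P 1 y) - (3*1^2 + Real.exp (3*1 + y^2)/3)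
      = φ (P 0 y) - (3*0^2 + Real.exp (3*0 + y^2)/3) := by
    intro y
    have key : ∀ t : ℝ, HasDerivAt
        (fun x : ℝ => φ (P x y) - (3*x^2 + Real.exp (3*x + y^2)/3)) 0 t := by
      intro t
      have h1 := line_x φ hφ y t
      have h1' : HasDerivAt (fun x : ℝ => φ (P x y)) (6*t + Real.exp (3*t + y^2)) t := by
        have hg := (h (P t y)).1
        rw [P_app0, P_app1] at hg
        rwa [hg] at h1
      have h2 : HasDerivAt (fun x : ℝ => 3*x^2 + Real.exp (3*x + y^2)/3)
          (6*t + Real.exp (3*t + y^2)) t := by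
        have ha : HasDerivAt (fun x : ℝ => 3*x^2) (6*t) t := by
          have := (hasDerivAt_pow 2 t).const_mul 3
          exact this.congr_deriv (by push_cast; ring)
        have hb : HasDerivAt (fun x : ℝ => Real.exp (3*x + y^2)/3) (Real.exp (3*t + y^2)) t := by
          have hl : HasDerivAt (fun x : ℝ => 3*x + y^2) 3 t := by
            have := ((hasDerivAt_id t).const_mul 3).add_const (y^2)
            exact this.congr_deriv (by ring)
          have := hl.exp.div_const 3
          exact this.congr_deriv (by ring)
        exact ha.add hb
      simpa [Pi.sub_def] using h1'.sub h2
    have := const_of_deriv_zero _ key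
    simpa using this
  have e1 := hv 0
  have e2 := hv 1
  have e3 := hh 0
  have e4 := hh 1
  norm_num at e1 e2 e3 e4
  have x1 : Real.exp 4 = Real.exp 3 * Real.exp 1 := by rw [← Real.exp_add]; norm_num
  have x2 : (1:ℝ) < Real.exp 1 := Real.one_lt_exp_iff.2 one_pos
  have x3 : (1:ℝ) < Real.exp 3 := Real.one_lt_exp_iff.2 (by norm_num)
  nlinarith [mul_pos (sub_pos.mpr x2) (sub_pos.mpr x3)]

/-- There is no differentiable `φ : ℝ² → ℝ` with gradient
`∇φ(x, y) = (6x + e^{3x + y²}, 2y·e^{3x + y²})`; consequently the composition of the cyclically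
monotone maps `(x, y) ↦ (3x, y)` and `(x, y) ↦ (2x + e^{x + y²}, 2y·e^{x + y²})` is not the
gradient of any differentiable function. -/
theorem composition_not_gradient :
    (¬ ∃ φ : EuclideanSpace ℝ (Fin 2) → ℝ, Differentiable ℝ φ ∧
      ∀ p : EuclideanSpace ℝ (Fin 2),
        gradient φ p 0 = 6 * p 0 + Real.exp (3 * p 0 + (p 1) ^ 2) ∧
        gradient φ p 1 = 2 * p 1 * Real.exp (3 * p 0 + (p 1) ^ 2)) ∧
    (¬ ∃ φ : EuclideanSpace ℝ (Fin 2) → ℝ, Differentiable ℝ φ ∧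
      gradient φ =
        (fun p : EuclideanSpace ℝ (Fin 2) =>
            (!₂[2 * p 0 + Real.exp (p 0 + (p 1) ^ 2),
               2 * p 1 * Real.exp (p 0 + (p 1) ^ 2)] : EuclideanSpace ℝ (Fin 2))) ∘
          (fun p : EuclideanSpace ℝ (Fin 2) =>
            (!₂[3 * p 0, p 1] : EuclideanSpace ℝ (Fin 2)))) := by
  constructor
  · rintro ⟨φ, hφ, h⟩
    exact no_grad φ hφ h
  · rintro ⟨φ, hφ, h⟩
    refine no_grad φ hφ (fun p => ?_)
    have hp := congrFun h p
    constructor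
    · have := congrArg (fun v : E2 => v 0) hp
      simp only [Function.comp_apply, Matrix.cons_val_zero, Matrix.cons_val_one,
        Matrix.head_cons] at this ⊢
      rw [this]; ring_nf
    · have := congrArg (fun v : E2 => v 1) hp
      simp only [Function.comp_apply, Matrix.cons_val_zero, Matrix.cons_val_one,
        Matrix.head_cons] at this ⊢
      rw [this]
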